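/- For fixed u ∈ (0,1), the function φ(a₁,...,aₙ) = ∏_{i=1}^n [e^{aᵢ} u / (1 - (1-e^{aᵢ})u)] is Schur-concave in (a₁,...,aₙ) ∈ ℝⁿ and increasing in each aᵢ. -/

import Mathlib

open Finset

/-- `x` majorizes `y`. -/
def Majorizes {n : ℕ} (x y : Fin n → ℝ) : Prop :=
  (∀ j : Fin n, ∑ i ∈ Finset.Iic j, (x ∘ Tuple.sort x) i ≤
      ∑ i ∈ Finset.Iic j, (y ∘ Tuple.sort y) i) ∧
    ∑ i, x i = ∑ i, y i

section aux

variable {u : ℝ}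

/-- Denominator helper. -/
noncomputable def POh (u t : ℝ) : ℝ := (1 - u) * Real.exp (-t) + u

/-- The derivative of the log of the factor. -/
noncomputable def POc (u t : ℝ) : ℝ := (1 - u) * Real.exp (-t) / POh u t

/-- The log of the factor. -/
noncomputable def POg (u t : ℝ) : ℝ := Real.log u - Real.log (POh u t)

lemma POh_pos (hu : u ∈ Set.Ioo (0:ℝ) 1) (t : ℝ) : 0 < POh u t := by
  have := hu.1; have := hu.2
  have : (0:ℝ) < (1 - u) * Real.exp (-t) :=
    mul_pos (by linarith [hu.2]) (Real.exp_pos _)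
  unfold POh; linarith [hu.1]

lemma POh_antitone (hu : u ∈ Set.Ioo (0:ℝ) 1) : Antitone (POh u) := by
  intro s t hst
  unfold POh
  have h1 : Real.exp (-t) ≤ Real.exp (-s) := Real.exp_le_exp.2 (by linarith)
  nlinarith [hu.2]

/-- The factor equals `u / POh u t`. -/
lemma PO_factor_eq (t : ℝ) :
    Real.exp t * u / (1 - (1 - Real.exp t) * u) = u / POh u t := by
  have he : Real.exp t ≠ 0 := (Real.exp_pos t).ne'
  have hd : 1 - (1 - Real.exp t) * u = Real.exp t * POh u t := by
    have h : Real.exp t * Real.exp (-t) = 1 := by rw [← Real.exp_add]; simp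
    unfold POh
    linear_combination (u - 1) * h
  rw [hd]
  exact mul_div_mul_left _ _ he

lemma PO_factor_pos (hu : u ∈ Set.Ioo (0:ℝ) 1) (t : ℝ) : 0 < u / POh u t :=
  div_pos hu.1 (POh_pos hu t)

lemma PO_factor_mono (hu : u ∈ Set.Ioo (0:ℝ) 1) : Monotone (fun t => u / POh u t) := by
  intro s t hst
  exact div_le_div_of_nonneg_left hu.1.le (POh_pos hu t) (POh_antitone hu hst)

lemma POc_antitone (hu : u ∈ Set.Ioo (0:ℝ) 1) : Antitone (POc u) := by
  have key : ∀ t, POc u t = 1 - u / POh u t := by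
    intro t
    have h := (POh_pos hu t).ne'
    unfold POc POh at *
    field_simp
    ring
  intro s t hst
  rw [key s, key t]
  linarith [PO_factor_mono hu hst]

lemma POg_hasDeriv (hu : u ∈ Set.Ioo (0:ℝ) 1) (t : ℝ) :
    HasDerivAt (POg u) (POc u t) t := by
  have h1 : HasDerivAt (fun t => Real.exp (-t)) (-Real.exp (-t)) t := by
    simpa [Function.comp_def] using (Real.hasDerivAt_exp (-t)).comp t (hasDerivAt_neg t)
  have h2 : HasDerivAt (POh u) (-((1 - u) * Real.exp (-t))) t := by
    have := (h1.const_mul (1 - u)).add_const u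
    simpa [show POh u = fun x => (1 - u) * Real.exp (-x) + u from rfl, mul_neg] using this
  have h3 : HasDerivAt (fun t => Real.log (POh u t)) (-((1 - u) * Real.exp (-t)) / POh u t) t :=
    h2.log (POh_pos hu t).ne'
  have := (hasDerivAt_const t (Real.log u)).sub h3
  rw [show POg u = (fun _ => Real.log u) - fun t => Real.log (POh u t) from rfl]
  simpa [POg, POc, neg_div] using this

/-- Gradient inequality for the concave function `POg u`. -/
lemma POg_gradient (hu : u ∈ Set.Ioo (0:ℝ) 1) (a b : ℝ) :
    POc u b * (b - a) ≤ POg u b - POg u a := by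
  rcases lt_trichotomy a b with hab | hab | hab
  · obtain ⟨ξ, hξ, hder⟩ := exists_hasDerivAt_eq_slope (POg u) (POc u) hab
      (fun x _ => (POg_hasDeriv hu x).continuousAt.continuousWithinAt)
      (fun x _ => POg_hasDeriv hu x)
    have hne : b - a ≠ 0 := sub_ne_zero.2 (ne_of_gt hab)
    have heq : POc u ξ * (b - a) = POg u b - POg u a := by
      rw [hder, div_mul_cancel₀ _ hne]
    rw [← heq]
    have hc : POc u b ≤ POc u ξ := POc_antitone hu hξ.2.le
    nlinarith
  · simp [hab]
  · obtain ⟨ξ, hξ, hder⟩ := exists_hasDerivAt_eq_slope (POg u) (POc u) hab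
      (fun x _ => (POg_hasDeriv hu x).continuousAt.continuousWithinAt)
      (fun x _ => POg_hasDeriv hu x)
    have hne : a - b ≠ 0 := sub_ne_zero.2 (ne_of_gt hab)
    have heq : POc u ξ * (b - a) = POg u b - POg u a := by
      rw [hder, show b - a = -(a - b) by ring, mul_neg, div_mul_cancel₀ _ hne]
      ring
    rw [← heq]
    have hc : POc u ξ ≤ POc u b := POc_antitone hu hξ.1.le
    nlinarith

/-- Abel-summation style lemma. -/
lemma abel_aux (c d : ℕ → ℝ) (hc : Antitone c) :
    ∀ n : ℕ, (∀ j ≤ n, 0 ≤ ∑ i ∈ Finset.range j, d i) →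
      c n * (∑ i ∈ Finset.range n, d i) ≤ ∑ i ∈ Finset.range n, c i * d i := by
  intro n
  induction n with
  | zero => simp
  | succ n ih =>
    intro hS
    have ih' := ih (fun j hj => hS j (hj.trans (Nat.le_succ n)))
    rw [Finset.sum_range_succ, Finset.sum_range_succ, mul_add]
    have h1 : c (n+1) * (∑ i ∈ Finset.range n, d i) + c (n+1) * d n ≤
        c n * (∑ i ∈ Finset.range n, d i) + c n * d n := by
      have := hS (n+1) le_rfl
      rw [Finset.sum_range_succ] at this
      nlinarith [hc (Nat.le_succ n)]
    linarith

end aux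

theorem po_series_survival_schur_concave_and_increasing {n : ℕ} (u : ℝ)
    (hu : u ∈ Set.Ioo (0:ℝ) 1) :
    (∀ a b : Fin n → ℝ, Majorizes a b →
      ∏ i, Real.exp (a i) * u / (1 - (1 - Real.exp (a i)) * u) ≤
        ∏ i, Real.exp (b i) * u / (1 - (1 - Real.exp (b i)) * u)) ∧
    (∀ a : Fin n → ℝ, ∀ i : Fin n, Monotone (fun t : ℝ =>
      ∏ j, Real.exp (Function.update a i t j) * u /
        (1 - (1 - Real.exp (Function.update a i t j)) * u))) := by
  have hfpos := PO_factor_pos hu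
  have prod_eq : ∀ x : Fin n → ℝ,
      ∏ i, Real.exp (x i) * u / (1 - (1 - Real.exp (x i)) * u) =
        Real.exp (∑ i, POg u (x i)) := by
    intro x
    rw [Real.exp_sum]
    refine Finset.prod_congr rfl fun i _ => ?_
    rw [PO_factor_eq]
    rw [POg, Real.exp_sub, Real.exp_log hu.1, Real.exp_log (POh_pos hu _)]
  constructor
  · -- Schur concavity
    intro a b hab
    rcases Nat.eq_zero_or_pos n with hn | hn
    · subst hn; simp
    rw [prod_eq, prod_eq]
    apply Real.exp_le_exp.2
    set a' := a ∘ Tuple.sort a with ha'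
    set b' := b ∘ Tuple.sort b with hb'
    have hb'mono : Monotone b' := Tuple.monotone_sort b
    -- reduce to sorted versions
    have suma : ∑ i, POg u (a i) = ∑ i, POg u (a' i) := by
      rw [ha']
      exact (Equiv.sum_comp (Tuple.sort a) (fun i => POg u (a i))).symm
    have sumb : ∑ i, POg u (b i) = ∑ i, POg u (b' i) := by
      rw [hb']
      exact (Equiv.sum_comp (Tuple.sort b) (fun i => POg u (b i))).symm
    rw [suma, sumb]
    -- d and c sequences on ℕ
    set last : Fin n := ⟨n - 1, Nat.sub_lt hn one_pos⟩ with hlast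
    set D : ℕ → ℝ := fun k => if h : k < n then b' ⟨k, h⟩ - a' ⟨k, h⟩ else 0 with hD
    set C : ℕ → ℝ := fun k => if h : k < n then POc u (b' ⟨k, h⟩) else POc u (b' last) with hC
    have hCmono : Antitone C := by
      intro s t hst
      rw [hC]
      by_cases hs : s < n
      · by_cases ht : t < n
        · simp only [dif_pos hs, dif_pos ht]
          exact POc_antitone hu (hb'mono (Fin.mk_le_mk.2 hst))
        · simp only [dif_pos hs, dif_neg ht]
          refine POc_antitone hu (hb'mono ?_)
          show (⟨s, hs⟩ : Fin n) ≤ last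
          rw [hlast, Fin.mk_le_mk]
          omega
      · have ht : ¬ t < n := fun h => hs (lt_of_le_of_lt hst h)
        simp [dif_neg hs, dif_neg ht]
    -- partial sums of D
    have hIic : ∀ j : Fin n, ∑ i ∈ Finset.range (j.1 + 1), D i =
        ∑ i ∈ Finset.Iic j, (b' i - a' i) := by
      intro j
      refine Finset.sum_nbij'
        (fun k => (⟨min k j.1, lt_of_le_of_lt (min_le_right _ _) j.2⟩ : Fin n))
        (fun i => i.1) ?_ ?_ ?_ ?_ ?_
      · intro k hk
        refine Finset.mem_Iic.2 ?_
        rw [Fin.le_def]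
        simp only
        omega
      · intro i hi
        simp only [Finset.mem_Iic, Fin.le_def] at hi
        simp only [Finset.mem_range]
        omega
      · intro k hk
        simp only [Finset.mem_range] at hk
        simp only
        omega
      · intro i hi
        simp only [Finset.mem_Iic, Fin.le_def] at hi
        apply Fin.ext
        simp only
        omega
      · intro k hk
        simp only [Finset.mem_range] at hk
        have hj2 := j.2
        have hkn : k < n := by omega
        simp [hD, hkn, min_eq_left (Nat.lt_succ_iff.1 hk)]
    have hpartial : ∀ j ≤ n, 0 ≤ ∑ i ∈ Finset.range j, D i := by
      intro j hj
      rcases Nat.eq_zero_or_pos j with h0 | h0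
      · simp [h0]
      · have hj1 : j - 1 < n := by omega
        have : j = (⟨j - 1, hj1⟩ : Fin n).1 + 1 := by simp; omega
        rw [this, hIic]
        rw [Finset.sum_sub_distrib]
        have := hab.1 ⟨j - 1, hj1⟩
        rw [← ha', ← hb'] at this
        linarith
    have htotal : ∑ i ∈ Finset.range n, D i = 0 := by
      have hn1 : n = last.1 + 1 := by simp [hlast]; omega
      rw [hn1, hIic]
      have hIicLast : Finset.Iic last = Finset.univ := by
        ext i; simp [Fin.le_def, hlast]; omega
      rw [hIicLast, Finset.sum_sub_distrib]
      have hA : ∑ i, a' i = ∑ i, a i :=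
        Equiv.sum_comp (Tuple.sort a) a
      have hB : ∑ i, b' i = ∑ i, b i :=
        Equiv.sum_comp (Tuple.sort b) b
      rw [hA, hB, hab.2]
      ring
    have abel := abel_aux C D hCmono n hpartial
    rw [htotal, mul_zero] at abel
    -- gradient inequality summed
    have hgrad : ∑ i ∈ Finset.range n, C i * D i ≤
        ∑ i, (POg u (b' i) - POg u (a' i)) := by
      rw [← Fin.sum_univ_eq_sum_range (fun i => C i * D i) n]
      apply Finset.sum_le_sum
      intro i _
      have hi : (i : ℕ) < n := i.2
      simp only [hC, hD, dif_pos hi]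
      have := POg_gradient hu (a' ⟨i, hi⟩) (b' ⟨i, hi⟩)
      simpa using this
    rw [Finset.sum_sub_distrib] at hgrad
    linarith
  · -- monotonicity
    intro a i s t hst
    simp only [PO_factor_eq]
    have hupd : ∀ j, Function.update a i s j ≤ Function.update a i t j := by
      intro j
      simp only [Function.update_apply]
      split_ifs <;> simp [hst]
    exact Finset.prod_le_prod (fun j _ => (PO_factor_pos hu _).le)
      (fun j _ => PO_factor_mono hu (hupd j))
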